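/- arXiv:1404.2414 — 4 statements merged into one kernel-verified Lean document; each statement's English description precedes it below -/
import Mathlib

section
/- Suppose κ and λ are regular cardinals with κ⁺ < λ, and S ⊆ {δ < λ : cf(δ) = κ} is stationary in λ. Then there exists a sequence ⟨C_δ : δ ∈ S⟩ such that: (a) for each δ ∈ S, C_δ is an unbounded subset of δ of order type κ, and in case κ > ℵ₀, C_δ is moreover closed in δ (hence a club of δ); and (b) for every club C of λ, the set {δ ∈ S : C_δ ⊆ C} is stationary in λ. -/
open Cardinal

/-- `C` is an unbounded subset of the ordinal `γ`. -/
def unbddIn (C : Set Ordinal) (γ : Ordinal) : Prop :=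
  C ⊆ Set.Iio γ ∧ ∀ β < γ, ∃ α ∈ C, β < α

/-- `C` is closed in `γ`: whenever `β < γ` is a limit ordinal and `C ∩ β` is
unbounded in `β`, then `β ∈ C`. -/
def closedIn (C : Set Ordinal) (γ : Ordinal) : Prop :=
  ∀ β < γ, Order.IsSuccLimit β → (∀ ε < β, ∃ α ∈ C, ε < α ∧ α < β) → β ∈ C

/-- `C` is a club of `γ`. -/
def clubIn (C : Set Ordinal) (γ : Ordinal) : Prop :=
  unbddIn C γ ∧ closedIn C γ

/-- `S` is stationary in `γ`. -/
def statIn (S : Set Ordinal) (γ : Ordinal) : Prop :=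
  ∀ C, clubIn C γ → (S ∩ C).Nonempty

/-- The order type of a (bounded) set of ordinals: the unique ordinal `o`
such that `A` is order-isomorphic to `Iio o`. -/
noncomputable def otp (A : Set Ordinal) : Ordinal :=
  sInf {o : Ordinal | Nonempty (A ≃o Set.Iio o)}

universe u

theorem typeIio (o : Ordinal.{u}) :
    Ordinal.type ((· < ·) : Set.Iio o → Set.Iio o → Prop) = Ordinal.lift.{u+1} o := by
  rw [← Ordinal.typein_ordinal o]
  rfl

theorem iio_iso_inj {o o' : Ordinal.{u}} (f : (Set.Iio o) ≃o (Set.Iio o')) : o = o' := by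
  have h := RelIso.ordinal_type_eq f.toRelIsoLT
  rw [typeIio, typeIio] at h
  exact Ordinal.lift_inj.1 h

theorem otp_eq {A : Set Ordinal.{u}} {o : Ordinal.{u}} (h : Nonempty (A ≃o Set.Iio o)) :
    otp A = o := by
  have : {o' : Ordinal | Nonempty (A ≃o Set.Iio o')} = {o} := by
    ext o'
    constructor
    · rintro ⟨g⟩
      exact (iio_iso_inj (h.some.symm.trans g)).symm
    · rintro rfl; exact h
  rw [otp, this, csInf_singleton]

theorem exists_otp {A : Set Ordinal.{u}} {γ : Ordinal.{u}} (hA : A ⊆ Set.Iio γ) :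
    ∃ o : Ordinal.{u}, Nonempty (A ≃o Set.Iio o) := by
  have emb : ((· < ·) : A → A → Prop) ↪r ((· < ·) : Set.Iio γ → Set.Iio γ → Prop) :=
    ⟨⟨fun x => ⟨x.1, hA x.2⟩, fun x y hxy => by
      apply Subtype.ext
      have := congrArg Subtype.val hxy
      simpa using this⟩, Iff.rfl⟩
  have hle : Ordinal.type ((· < ·) : A → A → Prop) ≤ Ordinal.lift.{u+1} γ := by
    rw [← typeIio]
    exact Ordinal.type_le_iff'.2 ⟨emb⟩
  obtain ⟨o, ho⟩ := Ordinal.mem_range_lift_of_le hle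
  refine ⟨o, ?_⟩
  have : Ordinal.type ((· < ·) : A → A → Prop)
      = Ordinal.type ((· < ·) : Set.Iio o → Set.Iio o → Prop) := by rw [typeIio, ho]
  obtain ⟨g⟩ := Ordinal.type_eq.1 this
  exact ⟨OrderIso.ofRelIsoLT g⟩


theorem ord_le_of_strictMono {o p : Ordinal.{u}} (f : Ordinal.{u} → Ordinal.{u})
    (hmono : ∀ x < o, ∀ y < o, x < y → f x < f y) (hval : ∀ x < o, f x < p) : o ≤ p := by
  have key : ∀ x < o, x ≤ f x := by
    intro x hx
    induction x using Ordinal.induction with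
    | h x IH =>
      by_contra h
      push_neg at h
      exact absurd (hmono (f x) (h.trans hx) x hx h) (not_lt.2 (IH (f x) h (h.trans hx)))
  by_contra h
  push_neg at h
  exact absurd (key p h) (not_le.2 (hval p h))

theorem csSup_mem_of_closed {E A : Set Ordinal} {L : Ordinal} (hcl : closedIn E L)
    (hAE : A ⊆ E) (hne : A.Nonempty) (hbdd : BddAbove A) (hlt : sSup A < L) : sSup A ∈ E := by
  by_cases hmem : sSup A ∈ A
  · exact hAE hmem
  have hstrict : ∀ a ∈ A, a < sSup A := fun a ha =>
    lt_of_le_of_ne (le_csSup hbdd ha) (fun h => hmem (h ▸ ha))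
  have hne' := hne
  obtain ⟨a₀, ha₀⟩ := hne'
  have hpos : sSup A ≠ 0 :=
    ((show (0 : Ordinal) ≤ a₀ from zero_le).trans_lt (hstrict a₀ ha₀)).ne'
  refine hcl _ hlt (Ordinal.isSuccLimit_iff.2 ⟨hpos, Order.isSuccPrelimit_of_succ_lt fun z hz => ?_⟩) (fun ε hε => ?_)
  · obtain ⟨a, ha, hza⟩ := exists_lt_of_lt_csSup hne hz
    exact lt_of_le_of_lt (Order.succ_le_of_lt hza) (hstrict a ha)
  · obtain ⟨a, ha, hεa⟩ := exists_lt_of_lt_csSup hne hε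
    exact ⟨a, hAE ha, hεa, hstrict a ha⟩

theorem iso_of_enum {c : Ordinal.{u} → Ordinal.{u}} {o : Ordinal.{u}}
    (hmono : ∀ i < o, ∀ j < o, i < j → c i < c j) :
    Nonempty ((c '' Set.Iio o : Set Ordinal) ≃o Set.Iio o) := by
  have hmono' : ∀ i : Set.Iio o, ∀ j : Set.Iio o, i ≤ j → c i.1 ≤ c j.1 := by
    intro i j hij
    rcases eq_or_lt_of_le hij with h | h
    · exact le_of_eq (congrArg c (congrArg Subtype.val h))
    · exact (hmono i.1 i.2 j.1 j.2 h).le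
  have hbij : Function.Bijective (fun i : Set.Iio o => (⟨c i.1, ⟨i.1, i.2, rfl⟩⟩ :
      (c '' Set.Iio o : Set Ordinal))) := by
    constructor
    · intro i j hij
      have hc : c i.1 = c j.1 := congrArg Subtype.val hij
      rcases lt_trichotomy i.1 j.1 with h | h | h
      · exact absurd hc (ne_of_lt (hmono i.1 i.2 j.1 j.2 h))
      · exact Subtype.ext h
      · exact absurd hc.symm (ne_of_lt (hmono j.1 j.2 i.1 i.2 h))
    · rintro ⟨y, j, hj, rfl⟩
      exact ⟨⟨j, hj⟩, rfl⟩
  refine ⟨(OrderIso.ofRelIsoLT ?_).symm⟩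
  refine ⟨Equiv.ofBijective _ hbij, ?_⟩
  intro i j
  show c i.1 < c j.1 ↔ i < j
  constructor
  · intro h
    by_contra hij
    push_neg at hij
    exact absurd h (not_lt.2 (hmono' j i hij))
  · intro h
    exact hmono i.1 i.2 j.1 j.2 h

theorem omega_limit {L : Ordinal.{u}} (hL : ℵ₀ < L.cof) (F : Ordinal.{u} → Ordinal.{u})
    (hF : ∀ x < L, x < F x ∧ F x < L) {β : Ordinal} (hβ : β < L) :
    ∃ y, β < y ∧ y < L ∧ Order.IsSuccLimit y ∧ ∀ ε < y, ∃ x, ε < x ∧ x < y ∧ F x < y ∧ x < L := by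
  have hLlim : Order.IsSuccLimit L := Ordinal.aleph0_le_cof.1 hL.le
  let g : ℕ → Ordinal := fun n => Nat.rec (β + 1) (fun _ ih => F ih) n
  have hg : ∀ n, g n < L := by
    intro n
    induction n with
    | zero =>
      show β + 1 < L
      rw [Ordinal.add_one_eq_succ]
      exact hLlim.succ_lt hβ
    | succ n ih => exact (hF (g n) ih).2
  have hgmono : ∀ n, g n < g (n + 1) := fun n => (hF (g n) (hg n)).1
  have hbdd : BddAbove (Set.range g) := ⟨L, by rintro x ⟨n, rfl⟩; exact (hg n).le⟩
  set y := ⨆ n, g n with hy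
  have hle : ∀ n, g n ≤ y := fun n => le_ciSup hbdd n
  have hyL : y < L := by
    apply Ordinal.iSup_lt_ord_lift _ hg
    rw [Cardinal.mk_nat, Cardinal.lift_aleph0]
    exact hL
  have hlt : ∀ ε < y, ∃ n, ε < g n := fun ε hε => exists_lt_of_lt_ciSup hε
  have hβy : β < y := lt_of_lt_of_le (lt_add_one β) (hle 0)
  have hylim : Order.IsSuccLimit y := by
    refine Ordinal.isSuccLimit_iff.2 ⟨fun h => absurd hβy (by rw [h]; simp), Order.isSuccPrelimit_of_succ_lt fun z hz => ?_⟩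
    obtain ⟨n, hn⟩ := hlt z hz
    exact lt_of_le_of_lt (Order.succ_le_of_lt hn) (lt_of_lt_of_le (hgmono n) (hle (n + 1)))
  refine ⟨y, hβy, hyL, hylim, fun ε hε => ?_⟩
  obtain ⟨n, hn⟩ := hlt ε hε
  refine ⟨g n, hn, lt_of_lt_of_le (hgmono n) (hle (n + 1)), ?_, hg n⟩
  exact lt_of_lt_of_le (hgmono (n + 1)) (hle (n + 2))


theorem club_inter {L θ : Ordinal.{u}} (hθ : θ.card < L.cof) (hL : ℵ₀ < L.cof)
    (E : Ordinal.{u} → Set Ordinal.{u}) (hE : ∀ j < θ, clubIn (E j) L) :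
    clubIn (Set.Iio L ∩ {x | ∀ j < θ, x ∈ E j}) L := by
  have hLlim : Order.IsSuccLimit L := Ordinal.aleph0_le_cof.1 hL.le
  have hch : ∀ j x : Ordinal, ∃ el, j < θ → x < L → el ∈ E j ∧ x < el ∧ el < L := by
    intro j x
    by_cases hj : j < θ ∧ x < L
    · obtain ⟨el, hel, hxel⟩ := (hE j hj.1).1.2 x hj.2
      exact ⟨el, fun _ _ => ⟨hel, hxel, (hE j hj.1).1.1 hel⟩⟩
    · exact ⟨0, fun h1 h2 => absurd ⟨h1, h2⟩ hj⟩
  choose ch hch using hch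
  set F : Ordinal → Ordinal := fun x => (x + 1) ⊔ Ordinal.bsup.{u, u} θ (fun j _ => ch j x)
    with hF
  have hFspec : ∀ x < L, x < F x ∧ F x < L := by
    intro x hx
    constructor
    · exact lt_of_lt_of_le (lt_add_one x) le_sup_left
    · apply sup_lt_iff.2
      constructor
      · rw [Ordinal.add_one_eq_succ]; exact hLlim.succ_lt hx
      · exact Ordinal.bsup_lt_ord hθ (fun j hj => (hch j x hj hx).2.2)
  constructor
  · constructor
    · exact fun x hx => hx.1
    · intro β hβ
      obtain ⟨y, hβy, hyL, hylim, hy⟩ := omega_limit hL F hFspec hβ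
      refine ⟨y, ⟨hyL, fun j hj => ?_⟩, hβy⟩
      refine (hE j hj).2 y hyL hylim (fun ε hε => ?_)
      obtain ⟨x, hεx, hxy, hFxy, hxL⟩ := hy ε hε
      refine ⟨ch j x, (hch j x hj hxL).1, hεx.trans (hch j x hj hxL).2.1, ?_⟩
      exact lt_of_le_of_lt (le_trans (Ordinal.le_bsup _ j hj) le_sup_right) hFxy
  · intro β hβL hβlim hub
    refine ⟨hβL, fun j hj => ?_⟩
    refine (hE j hj).2 β hβL hβlim (fun ε hε => ?_)
    obtain ⟨α, hα, hεα, hαβ⟩ := hub ε hε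
    exact ⟨α, hα.2 j hj, hεα, hαβ⟩

def accSet (X : Set Ordinal) (L : Ordinal) : Set Ordinal :=
  {β | β < L ∧ Order.IsSuccLimit β ∧ ∀ ε < β, ∃ x ∈ X, ε < x ∧ x < β}

theorem accSet_subset {X : Set Ordinal} {L : Ordinal} (hcl : closedIn X L) :
    accSet X L ⊆ X := fun β hβ => hcl β hβ.1 hβ.2.1 hβ.2.2

theorem accSet_mono {X X' : Set Ordinal} {L : Ordinal} (h : X ⊆ X') :
    accSet X L ⊆ accSet X' L := by
  rintro β ⟨h1, h2, h3⟩
  exact ⟨h1, h2, fun ε hε => by obtain ⟨x, hx, h4, h5⟩ := h3 ε hε; exact ⟨x, h hx, h4, h5⟩⟩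

theorem accSet_club {X : Set Ordinal.{u}} {L : Ordinal.{u}} (hL : ℵ₀ < L.cof)
    (hX : clubIn X L) : clubIn (accSet X L) L := by
  have hch : ∀ x : Ordinal, ∃ el, x < L → el ∈ X ∧ x < el ∧ el < L := by
    intro x
    by_cases hx : x < L
    · obtain ⟨el, hel, hxel⟩ := hX.1.2 x hx
      exact ⟨el, fun _ => ⟨hel, hxel, hX.1.1 hel⟩⟩
    · exact ⟨0, fun h => absurd h hx⟩
  choose ch hch using hch
  have hFspec : ∀ x < L, x < ch x ∧ ch x < L := fun x hx => ⟨(hch x hx).2.1, (hch x hx).2.2⟩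
  constructor
  · constructor
    · exact fun x hx => hx.1
    · intro β hβ
      obtain ⟨y, hβy, hyL, hylim, hy⟩ := omega_limit hL ch hFspec hβ
      refine ⟨y, ⟨hyL, hylim, fun ε hε => ?_⟩, hβy⟩
      obtain ⟨x, hεx, hxy, hFxy, hxL⟩ := hy ε hε
      exact ⟨ch x, (hch x hxL).1, hεx.trans (hch x hxL).2.1, hFxy⟩
  · intro β hβL hβlim hub
    refine ⟨hβL, hβlim, fun ε hε => ?_⟩
    obtain ⟨γ, hγ, hεγ, hγβ⟩ := hub ε hε
    obtain ⟨x, hx, hεx, hxγ⟩ := hγ.2.2 ε hεγ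
    exact ⟨x, hx, hεx, hxγ.trans hγβ⟩


theorem exists_club_of_cof {κ : Cardinal.{u}} (hκ : κ.IsRegular) {δ : Ordinal.{u}}
    (hδ : δ.cof = κ) :
    ∃ (e : Set Ordinal.{u}) (c : Ordinal.{u} → Ordinal.{u}),
      (∀ i < κ.ord, ∀ j < κ.ord, i < j → c i < c j) ∧ e = c '' Set.Iio κ.ord ∧
      e ⊆ Set.Iio δ ∧ unbddIn e δ ∧ closedIn e δ ∧
      Nonempty ((e : Set Ordinal) ≃o Set.Iio κ.ord) := by
  have hκord : Order.IsSuccLimit κ.ord := Cardinal.isSuccLimit_ord hκ.aleph0_le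
  have hδlim : Order.IsSuccLimit δ := Ordinal.aleph0_le_cof.1 (by rw [hδ]; exact hκ.aleph0_le)
  -- fundamental sequence
  obtain ⟨f, hf⟩ := Ordinal.exists_fundamental_sequence δ
  have hco : δ.cof.ord = κ.ord := by rw [hδ]
  set d : Ordinal → Ordinal := fun j => if h : j < δ.cof.ord then f j h else 0 with hdd
  have hd1 : ∀ j < κ.ord, d j < δ := by
    intro j hj
    rw [← hco] at hj
    simp only [hdd, dif_pos hj]
    rw [← hf.blsub_eq]
    exact Ordinal.lt_blsub _ j hj
  have hd2 : ∀ β < δ, ∃ j, j < κ.ord ∧ β ≤ d j := by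
    intro β hβ
    rw [← hf.blsub_eq, Ordinal.lt_blsub_iff] at hβ
    obtain ⟨j, hj, hβj⟩ := hβ
    exact ⟨j, hco ▸ hj, by simp only [hdd, dif_pos hj]; exact hβj⟩
  -- the recursive enumeration
  set c : Ordinal.{u} → Ordinal.{u} := Ordinal.lt_wf.fix
    (fun i rec => sInf {x | x < δ ∧ ∀ j, ∀ h : j < i, rec j h < x ∧ d j < x}) with hc
  have hceq : ∀ i, c i = sInf {x | x < δ ∧ ∀ j < i, c j < x ∧ d j < x} := by
    intro i
    rw [hc]
    exact Ordinal.lt_wf.fix_eq _ i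
  set T : Ordinal → Set Ordinal := fun i => {x | x < δ ∧ ∀ j < i, c j < x ∧ d j < x} with hT
  have hckey : ∀ i < κ.ord, c i < δ ∧ ∀ j < i, c j < c i ∧ d j < c i := by
    intro i hi
    induction i using Ordinal.induction with
    | h i IH =>
      have hne : (T i).Nonempty := by
        have hbsup : Ordinal.bsup.{u, u} i (fun j hj => c j ⊔ d j) < δ := by
          apply Ordinal.bsup_lt_ord
          · rw [hδ]; exact Cardinal.lt_ord.1 hi
          · intro j hj
            exact sup_lt_iff.2 ⟨(IH j hj (hj.trans hi)).1, hd1 j (hj.trans hi)⟩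
        refine ⟨Ordinal.bsup.{u, u} i (fun j hj => c j ⊔ d j) + 1, hδlim.succ_lt hbsup, ?_⟩
        intro j hj
        constructor
        · exact lt_of_le_of_lt (le_trans le_sup_left (Ordinal.le_bsup _ j hj)) (lt_add_one _)
        · exact lt_of_le_of_lt (le_trans le_sup_right (Ordinal.le_bsup _ j hj)) (lt_add_one _)
      have : c i ∈ T i := by rw [hT, hceq i]; exact csInf_mem hne
      exact ⟨this.1, this.2⟩
  have hmono : ∀ i < κ.ord, ∀ j < κ.ord, i < j → c i < c j := by
    intro i _ j hj hij
    exact ((hckey j hj).2 i hij).1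
  have hmono' : ∀ i j, i ≤ j → j < κ.ord → c i ≤ c j := by
    intro i j hij hj
    rcases eq_or_lt_of_le hij with h | h
    · exact h ▸ le_refl _
    · exact (hmono i (h.trans hj) j hj h).le
  set e : Set Ordinal := c '' Set.Iio κ.ord with he
  have hesub : e ⊆ Set.Iio δ := by
    rintro x ⟨i, hi, rfl⟩; exact (hckey i hi).1
  have heunb : unbddIn e δ := by
    refine ⟨hesub, fun β hβ => ?_⟩
    obtain ⟨j, hj, hβj⟩ := hd2 β hβ
    refine ⟨c (j + 1), ⟨j + 1, ?_, rfl⟩, ?_⟩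
    · rw [Ordinal.add_one_eq_succ]; exact hκord.succ_lt hj
    · have hj1 : j + 1 < κ.ord := by rw [Ordinal.add_one_eq_succ]; exact hκord.succ_lt hj
      exact lt_of_le_of_lt hβj ((hckey (j + 1) hj1).2 j (lt_add_one j)).2
  have hecl : closedIn e δ := by
    intro β hβδ hβlim hub
    set U : Set Ordinal := {i | i < κ.ord ∧ β ≤ c i} with hU
    have hUne : U.Nonempty := by
      obtain ⟨α, ⟨i, hi, rfl⟩, hβα⟩ := heunb.2 β hβδ
      exact ⟨i, hi, hβα.le⟩
    set i₀ : Ordinal := sInf U with hi₀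
    have hi₀mem : i₀ ∈ U := csInf_mem hUne
    have hlow : ∀ j < i₀, c j < β := by
      intro j hj
      by_contra hcon
      push_neg at hcon
      exact absurd (csInf_le (OrderBot.bddBelow _) (show j ∈ U from ⟨hj.trans hi₀mem.1, hcon⟩)) (not_le.2 hj)
    have hgen : ∀ ε < β, False → True := fun _ _ _ => trivial
    rcases Ordinal.zero_or_succ_or_isSuccLimit i₀ with h0 | ⟨k, hk⟩ | hlim
    · obtain ⟨α, ⟨j, hj, rfl⟩, _, hαβ⟩ := hub 0 hβlim.pos
      have : c i₀ ≤ c j := hmono' i₀ j (h0 ▸ (show (0 : Ordinal) ≤ j from zero_le)) hj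
      exact absurd (lt_of_le_of_lt (hi₀mem.2.trans this) hαβ) (lt_irrefl β)
    · have hk' : k < i₀ := by rw [← hk]; exact Order.lt_succ k
      obtain ⟨α, ⟨j, hj, rfl⟩, hkα, hαβ⟩ := hub (c k) (hlow k hk')
      have hkj : k < j := by
        by_contra hcon
        push_neg at hcon
        exact absurd (hmono' j k hcon (hk'.trans hi₀mem.1)) (not_le.2 hkα)
      have : i₀ ≤ j := by rw [← hk]; exact Order.succ_le_of_lt hkj
      exact absurd (lt_of_le_of_lt (hi₀mem.2.trans (hmono' i₀ j this hj)) hαβ) (lt_irrefl β)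
    · -- limit case: c i₀ = β
      have hsup : c i₀ ≤ β := by
        rw [hceq i₀]
        apply csInf_le (OrderBot.bddBelow _)
        refine ⟨hβδ, fun j hj => ⟨hlow j hj, ?_⟩⟩
        -- d j < β : d j < c (j+1) ≤ c-stuff < β
        have hj1 : j + 1 < i₀ := by
          rw [Ordinal.add_one_eq_succ]; exact hlim.succ_lt hj
        exact lt_trans ((hckey (j + 1) (hj1.trans hi₀mem.1)).2 j (lt_add_one j)).2
          (hlow (j + 1) hj1)
      exact ⟨i₀, hi₀mem.1, le_antisymm hsup hi₀mem.2⟩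
  exact ⟨e, c, hmono, rfl, hesub, heunb, hecl, iso_of_enum hmono⟩


/-- The "glued" club: suprema below points of `e` of the club `X`. -/
def glue (X e : Set Ordinal) : Set Ordinal :=
  {β | 0 < β ∧ ∃ α ∈ e, (X ∩ Set.Iio α).Nonempty ∧ β = sSup (X ∩ Set.Iio α)}

theorem bdd_inter_Iio (X : Set Ordinal) (α : Ordinal) : BddAbove (X ∩ Set.Iio α) :=
  ⟨α, fun y hy => hy.2.le⟩

theorem sSup_int_le (X : Set Ordinal) {α : Ordinal} (h : (X ∩ Set.Iio α).Nonempty) :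
    sSup (X ∩ Set.Iio α) ≤ α :=
  csSup_le h (fun y hy => hy.2.le)

theorem glue_spec {δ : Ordinal.{u}} {κ : Cardinal.{u}} (hκ : κ.IsRegular) (hδcof : δ.cof = κ)
    {e : Set Ordinal.{u}} {c : Ordinal.{u} → Ordinal.{u}}
    (hmono : ∀ i < κ.ord, ∀ j < κ.ord, i < j → c i < c j) (hee : e = c '' Set.Iio κ.ord)
    (hesub : e ⊆ Set.Iio δ) (heunb : unbddIn e δ) (hecl : closedIn e δ)
    {X : Set Ordinal.{u}}
    (hacc : ∀ ε < δ, ∃ x ∈ X, ε < x ∧ x < δ) :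
    glue X e ⊆ Set.Iio δ ∧ unbddIn (glue X e) δ ∧ closedIn (glue X e) δ ∧
      otp (glue X e) = κ.ord := by
  have hδlim : Order.IsSuccLimit δ := Ordinal.aleph0_le_cof.1 (by rw [hδcof]; exact hκ.aleph0_le)
  have hcmono' : ∀ i j, i ≤ j → j < κ.ord → c i ≤ c j := by
    intro i j hij hj
    rcases eq_or_lt_of_le hij with h | h
    · exact h ▸ le_refl _
    · exact (hmono i (h.trans hj) j hj h).le
  have gsub : glue X e ⊆ Set.Iio δ := by
    rintro β ⟨hβ0, α, hαe, hne, rfl⟩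
    exact lt_of_le_of_lt (sSup_int_le X hne) (hesub hαe)
  have gunb : unbddIn (glue X e) δ := by
    refine ⟨gsub, fun ε hε => ?_⟩
    obtain ⟨x, hxX, hεx, hxδ⟩ := hacc ε hε
    obtain ⟨α, hαe, hxα⟩ := heunb.2 x hxδ
    have hxm : x ∈ X ∩ Set.Iio α := ⟨hxX, hxα⟩
    have hxs : x ≤ sSup (X ∩ Set.Iio α) := le_csSup (bdd_inter_Iio X α) hxm
    refine ⟨sSup (X ∩ Set.Iio α), ⟨?_, α, hαe, ⟨x, hxm⟩, rfl⟩, lt_of_lt_of_le hεx hxs⟩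
    exact lt_of_le_of_lt (show (0 : Ordinal) ≤ ε from zero_le) (lt_of_lt_of_le hεx hxs)
  have gcl : closedIn (glue X e) δ := by
    intro β hβδ hβlim hub
    set A : Set Ordinal := {α | α ∈ e ∧ (X ∩ Set.Iio α).Nonempty ∧ sSup (X ∩ Set.Iio α) < β}
      with hA
    have hval : ∀ ε < β, ∃ α ∈ A, ε < sSup (X ∩ Set.Iio α) := by
      intro ε hε
      obtain ⟨γ, ⟨hγ0, α, hαe, hne, rfl⟩, hεγ, hγβ⟩ := hub ε hε
      exact ⟨α, ⟨hαe, hne, hγβ⟩, hεγ⟩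
    have hAne : A.Nonempty := by
      obtain ⟨α, hα, _⟩ := hval 0 hβlim.pos
      exact ⟨α, hα⟩
    obtain ⟨xb, hxbX, hβxb, hxbδ⟩ := hacc β hβδ
    have hAbd : ∀ α ∈ A, α ≤ xb := by
      intro α hα
      by_contra hcon
      push_neg at hcon
      have : xb ≤ sSup (X ∩ Set.Iio α) := le_csSup (bdd_inter_Iio X α) ⟨hxbX, hcon⟩
      exact absurd (lt_of_le_of_lt this hα.2.2) (not_lt.2 hβxb.le)
    have hAbdd : BddAbove A := ⟨xb, hAbd⟩
    have hsupA : sSup A < δ := lt_of_le_of_lt (csSup_le hAne hAbd) hxbδ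
    have hαe : sSup A ∈ e := csSup_mem_of_closed hecl (fun α hα => hα.1) hAne hAbdd hsupA
    have hXne : (X ∩ Set.Iio (sSup A)).Nonempty := by
      obtain ⟨α, hα⟩ := hAne
      obtain ⟨x, hx⟩ := hα.2.1
      exact ⟨x, hx.1, lt_of_lt_of_le hx.2 (le_csSup hAbdd hα)⟩
    have hvβ : sSup (X ∩ Set.Iio (sSup A)) ≤ β := by
      apply csSup_le hXne
      rintro x ⟨hxX, hxα⟩
      obtain ⟨α, hαA, hxα'⟩ := exists_lt_of_lt_csSup hAne hxα
      exact (le_csSup (bdd_inter_Iio X α) ⟨hxX, hxα'⟩).trans hαA.2.2.le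
    have hβv : β ≤ sSup (X ∩ Set.Iio (sSup A)) := by
      by_contra hcon
      push_neg at hcon
      obtain ⟨α, hαA, hlt'⟩ := hval _ hcon
      have : sSup (X ∩ Set.Iio α) ≤ sSup (X ∩ Set.Iio (sSup A)) := by
        apply csSup_le_csSup (bdd_inter_Iio X _) hαA.2.1
        exact Set.inter_subset_inter_right X (Set.Iio_subset_Iio (le_csSup hAbdd hαA))
      exact absurd (lt_of_lt_of_le hlt' this) (lt_irrefl _)
    exact ⟨hβlim.pos, sSup A, hαe, hXne, (le_antisymm hvβ hβv).symm⟩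
  obtain ⟨o, hiso⟩ := exists_otp gsub
  obtain ⟨iso⟩ := hiso
  -- o ≤ κ.ord
  set m : Ordinal → Ordinal := fun γ =>
    sInf {α | α ∈ e ∧ (X ∩ Set.Iio α).Nonempty ∧ γ = sSup (X ∩ Set.Iio α)} with hm
  have hmmem : ∀ γ ∈ glue X e,
      m γ ∈ {α | α ∈ e ∧ (X ∩ Set.Iio α).Nonempty ∧ γ = sSup (X ∩ Set.Iio α)} := by
    rintro γ ⟨hγ0, α, hαe, hne, rfl⟩
    exact csInf_mem ⟨α, hαe, hne, rfl⟩
  have hmmono : ∀ γ ∈ glue X e, ∀ γ' ∈ glue X e, γ < γ' → m γ < m γ' := by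
    intro γ hγ γ' hγ' hlt'
    by_contra hcon
    push_neg at hcon
    have h1 := (hmmem γ hγ).2.2
    have h2 := (hmmem γ' hγ').2.2
    have : sSup (X ∩ Set.Iio (m γ')) ≤ sSup (X ∩ Set.Iio (m γ)) := by
      apply csSup_le_csSup (bdd_inter_Iio X _) (hmmem γ' hγ').2.1
      exact Set.inter_subset_inter_right X (Set.Iio_subset_Iio hcon)
    rw [← h1, ← h2] at this
    exact absurd (lt_of_lt_of_le hlt' this) (lt_irrefl _)
  set φ : Ordinal → Ordinal := fun γ => sInf {j | j < κ.ord ∧ c j = m γ} with hφ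
  have hφmem : ∀ γ ∈ glue X e, φ γ < κ.ord ∧ c (φ γ) = m γ := by
    intro γ hγ
    have := (hmmem γ hγ).1
    rw [hee] at this
    obtain ⟨j, hj, hcj⟩ := this
    exact csInf_mem (⟨j, hj, hcj⟩ : Set.Nonempty {j | j < κ.ord ∧ c j = m γ})
  have hφmono : ∀ γ ∈ glue X e, ∀ γ' ∈ glue X e, γ < γ' → φ γ < φ γ' := by
    intro γ hγ γ' hγ' hlt'
    by_contra hcon
    push_neg at hcon
    have := hcmono' (φ γ') (φ γ) hcon (hφmem γ hγ).1
    rw [(hφmem γ hγ).2, (hφmem γ' hγ').2] at this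
    exact absurd (hmmono γ hγ γ' hγ' hlt') (not_lt.2 this)
  have hoκ : o ≤ κ.ord := by
    set F : Ordinal → Ordinal := fun x => if h : x < o then φ (iso.symm ⟨x, h⟩).1 else 0 with hF
    apply ord_le_of_strictMono F
    · intro x hx y hy hxy
      rw [hF]
      simp only [dif_pos hx, dif_pos hy]
      have hmem1 : ((iso.symm ⟨x, hx⟩ : glue X e) : Ordinal) ∈ glue X e := (iso.symm ⟨x, hx⟩).2
      have hmem2 : ((iso.symm ⟨y, hy⟩ : glue X e) : Ordinal) ∈ glue X e := (iso.symm ⟨y, hy⟩).2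
      apply hφmono _ hmem1 _ hmem2
      have : iso.symm ⟨x, hx⟩ < iso.symm ⟨y, hy⟩ := by
        rw [OrderIso.lt_iff_lt]
        exact Subtype.mk_lt_mk.2 hxy
      exact this
    · intro x hx
      rw [hF]
      simp only [dif_pos hx]
      exact (hφmem _ (iso.symm ⟨x, hx⟩).2).1
  have hκo : κ.ord ≤ o := by
    rw [Cardinal.ord_le]
    set fo : o.ToType → Ordinal := fun t => (iso.symm ((Ordinal.ToType.mk (o := o)).symm t)).1
      with hfo
    have hlsub : Ordinal.lsub.{u, u} fo = δ := by
      apply le_antisymm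
      · exact Ordinal.lsub_le (fun t => gsub (iso.symm ((Ordinal.ToType.mk (o := o)).symm t)).2)
      · by_contra hcon
        push_neg at hcon
        obtain ⟨γ, hγg, hlγ⟩ := gunb.2 _ hcon
        have : fo ((Ordinal.ToType.mk (o := o)) (iso ⟨γ, hγg⟩)) = γ := by
          rw [hfo]
          simp
        exact absurd (this ▸ Ordinal.lt_lsub fo ((Ordinal.ToType.mk (o := o)) (iso ⟨γ, hγg⟩)))
          (not_lt.2 hlγ.le)
    have : δ.cof ≤ #o.ToType := hlsub ▸ Ordinal.cof_lsub_le fo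
    rwa [hδcof, Cardinal.mk_toType] at this
  exact ⟨gsub, gunb, gcl, (otp_eq ⟨iso⟩).trans (le_antisymm hoκ hκo)⟩


theorem club_inter2 {L : Ordinal.{u}} (hL : ℵ₀ < L.cof) {A B : Set Ordinal.{u}}
    (hA : clubIn A L) (hB : clubIn B L) : clubIn (A ∩ B) L := by
  classical
  have h2 : ((2 : Ordinal)).card < L.cof := by
    have : ((2 : Ordinal)).card = 2 := Ordinal.card_ofNat 2
    rw [this]
    exact lt_trans (Cardinal.nat_lt_aleph0 2) hL
  have := club_inter h2 hL (fun j => if j = 0 then A else B) (by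
    intro j _
    by_cases hj : j = 0 <;> simp [hj, hA, hB])
  have heq : Set.Iio L ∩ {x | ∀ j < (2 : Ordinal), x ∈ (if j = 0 then A else B)} = A ∩ B := by
    ext x
    constructor
    · rintro ⟨hxL, hx⟩
      have h0 := hx 0 (by norm_num)
      have h1 := hx 1 (by norm_num)
      simp only [if_pos rfl] at h0
      simp only [one_ne_zero, if_neg] at h1
      exact ⟨h0, h1⟩
    · rintro ⟨hxA, hxB⟩
      refine ⟨hA.1.1 hxA, fun j _ => ?_⟩
      by_cases hj : j = 0 <;> simp [hj, hxA, hxB]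
  rwa [heq] at this


/-- Claim 1.8A: club guessing.  If `κ⁺ < λ` are regular and
`S ⊆ {δ < λ : cf δ = κ}` is stationary, then there is `⟨C_δ : δ ∈ S⟩` with each
`C_δ` an unbounded subset of `δ` of order type `κ` (closed when `κ > ℵ₀`) such
that for every club `C` of `λ` the set `{δ ∈ S : C_δ ⊆ C}` is stationary. -/
theorem statement0 (κ lam : Cardinal) (hκ : κ.IsRegular) (hlam : lam.IsRegular)
    (hlt : Order.succ κ < lam)
    (S : Set Ordinal) (hS : ∀ δ ∈ S, δ < lam.ord ∧ δ.cof = κ)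
    (hstat : statIn S lam.ord) :
    ∃ C : Ordinal → Set Ordinal,
      (∀ δ ∈ S,
        unbddIn (C δ) δ ∧ otp (C δ) = κ.ord ∧ (ℵ₀ < κ → closedIn (C δ) δ)) ∧
      (∀ D, clubIn D lam.ord → statIn {δ | δ ∈ S ∧ C δ ⊆ D} lam.ord) := by
  classical
  by_contra hcon
  set L := lam.ord with hLdef
  have hκlam : κ < lam := lt_trans (Order.lt_succ κ) hlt
  have hLcof : L.cof = lam := hlam.cof_eq
  have hℵL : ℵ₀ < L.cof := by rw [hLcof]; exact lt_of_le_of_lt hκ.aleph0_le hκlam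
  have hsucc : (Order.succ κ).IsRegular := Cardinal.isRegular_succ hκ.aleph0_le
  set Λ := (Order.succ κ).ord with hΛdef
  have hΛlim : Order.IsSuccLimit Λ := Cardinal.isSuccLimit_ord hsucc.aleph0_le
  have hΛcard : ∀ i ≤ Λ, i.card < lam := by
    intro i hi
    refine lt_of_le_of_lt ?_ hlt
    rw [← Cardinal.card_ord (Order.succ κ)]
    exact Ordinal.card_le_card hi
  -- choose clubs e δ for δ ∈ S
  have hEx : ∀ δ : Ordinal, ∃ (e : Set Ordinal) (c : Ordinal → Ordinal), δ ∈ S →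
      ((∀ i < κ.ord, ∀ j < κ.ord, i < j → c i < c j) ∧ e = c '' Set.Iio κ.ord ∧
      e ⊆ Set.Iio δ ∧ unbddIn e δ ∧ closedIn e δ ∧
      Nonempty ((e : Set Ordinal) ≃o Set.Iio κ.ord)) := by
    intro δ
    by_cases hδ : δ ∈ S
    · obtain ⟨e, c, h⟩ := exists_club_of_cof hκ (hS δ hδ).2
      exact ⟨e, c, fun _ => h⟩
    · exact ⟨∅, fun _ => 0, fun h => absurd h hδ⟩
  choose e ce hece using hEx
  -- the candidate assignment attached to a set X
  set A : Set Ordinal → Ordinal → Set Ordinal := fun X δ =>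
    if (∀ ε < δ, ∃ x ∈ X, ε < x ∧ x < δ) then glue X (e δ) else e δ with hAdef
  have hAspec : ∀ X : Set Ordinal, ∀ δ ∈ S,
      unbddIn (A X δ) δ ∧ otp (A X δ) = κ.ord ∧ (ℵ₀ < κ → closedIn (A X δ) δ) := by
    intro X δ hδ
    obtain ⟨h1, h2, h3, h4, h5, h6⟩ := hece δ hδ
    by_cases hax : ∀ ε < δ, ∃ x ∈ X, ε < x ∧ x < δ
    · have hg := glue_spec hκ (hS δ hδ).2 h1 h2 h3 h4 h5 hax
      rw [hAdef]
      simp only [if_pos hax]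
      exact ⟨hg.2.1, hg.2.2.2, fun _ => hg.2.2.1⟩
    · rw [hAdef]
      simp only [if_neg hax]
      exact ⟨h4, otp_eq h6, fun _ => h5⟩
  -- failing witnesses for each club
  have hW : ∀ X : Set Ordinal, ∃ D F : Set Ordinal, clubIn X L →
      (clubIn D L ∧ clubIn F L ∧ ∀ δ, δ ∈ S → A X δ ⊆ D → δ ∉ F) := by
    intro X
    by_cases hX : clubIn X L
    · have hnb : ¬ ∀ D, clubIn D L → statIn {δ | δ ∈ S ∧ A X δ ⊆ D} L := by
        intro hq
        exact hcon ⟨A X, hAspec X, hq⟩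
      push_neg at hnb
      obtain ⟨D, hD, hns⟩ := hnb
      rw [statIn] at hns
      push_neg at hns
      obtain ⟨F, hF, hFe⟩ := hns
      refine ⟨D, F, fun _ => ⟨hD, hF, fun δ hδ hsub hδF => ?_⟩⟩
      have hmem : δ ∈ {δ | δ ∈ S ∧ A X δ ⊆ D} ∩ F := ⟨⟨hδ, hsub⟩, hδF⟩
      rw [hFe] at hmem
      exact hmem
    · exact ⟨∅, ∅, fun h => absurd h hX⟩
  choose D F hDF using hW
  -- the recursion
  set step : Set Ordinal → Set Ordinal := fun X => accSet X L ∩ (D X ∩ F X) with hstep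
  set E : Ordinal → Set Ordinal := Ordinal.lt_wf.fix
    (fun i rec => step (Set.Iio L ∩ {x | ∀ j, ∀ h : j < i, x ∈ rec j h})) with hEdef
  set G : Ordinal → Set Ordinal := fun i => Set.Iio L ∩ {x | ∀ j, j < i → x ∈ E j} with hGdef
  have hEeq : ∀ i, E i = step (G i) := by
    intro i
    rw [hEdef]
    exact Ordinal.lt_wf.fix_eq _ i
  have hGmono : ∀ i j, i ≤ j → G j ⊆ G i := by
    intro i j hij x hx
    exact ⟨hx.1, fun k hk => hx.2 k (lt_of_lt_of_le hk hij)⟩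
  -- clubness
  have hclub : ∀ i, i ≤ Λ → clubIn (G i) L ∧ clubIn (E i) L := by
    intro i
    induction i using Ordinal.induction with
    | h i IH =>
      intro hi
      have hG : clubIn (G i) L := by
        have := club_inter (θ := i) (L := L) (by rw [hLcof]; exact hΛcard i hi) hℵL E
          (fun j hj => (IH j hj ((le_of_lt hj).trans hi)).2)
        exact this
      have hDF' := hDF (G i) hG
      have hEi : clubIn (E i) L := by
        rw [hEeq i, hstep]
        exact club_inter2 hℵL (accSet_club hℵL hG) (club_inter2 hℵL hDF'.1 hDF'.2.1)
      exact ⟨hG, hEi⟩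
  -- pick δ
  have hGΛ := (hclub Λ le_rfl).1
  obtain ⟨δ, hδS, hδacc⟩ := hstat _ (accSet_club hℵL hGΛ)
  have hδL : δ < L := (hS δ hδS).1
  have hδcof : δ.cof = κ := (hS δ hδS).2
  obtain ⟨hc1, hc2, hc3, hc4, hc5, hc6⟩ := hece δ hδS
  have hδinG : ∀ j < Λ, δ ∈ E j := fun j hj => (accSet_subset hGΛ.2 hδacc).2 j hj
  -- stabilization
  set f : Ordinal → Ordinal → Ordinal := fun α i => sSup (G i ∩ Set.Iio α) with hfdef
  have hfmono : ∀ α i j, i ≤ j → f α j ≤ f α i := by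
    intro α i j hij
    by_cases hne : (G j ∩ Set.Iio α).Nonempty
    · exact csSup_le_csSup (bdd_inter_Iio _ α) hne
        (Set.inter_subset_inter_left _ (hGmono i j hij))
    · rw [Set.not_nonempty_iff_eq_empty] at hne
      rw [hfdef]
      simp only [hne, csSup_empty]
      exact zero_le
  have hstab : ∀ α, ∃ i₀, i₀ < Λ ∧ ∀ i, i₀ ≤ i → i < Λ → f α i = f α i₀ := by
    intro α
    have hne' : ((f α) '' Set.Iio Λ).Nonempty := ⟨f α 0, 0, hΛlim.pos, rfl⟩
    obtain ⟨i₀, hi₀Λ, hi₀⟩ := csInf_mem hne'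
    refine ⟨i₀, hi₀Λ, fun i hle hiΛ => ?_⟩
    refine le_antisymm (hfmono α i₀ i hle) ?_
    rw [hi₀]
    exact csInf_le (OrderBot.bddBelow _) ⟨i, hiΛ, rfl⟩
  choose i₀ hi₀Λ hi₀ using hstab
  -- the stable index
  set i' : Ordinal := Ordinal.bsup κ.ord (fun j _ => i₀ (ce δ j)) with hi'def
  have hi'Λ : i' < Λ := by
    apply Ordinal.bsup_lt_ord
    · rw [Cardinal.card_ord, hsucc.cof_eq]
      exact Order.lt_succ κ
    · exact fun j hj => hi₀Λ (ce δ j)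
  have hδGi' : δ ∈ accSet (G i') L := accSet_mono (hGmono i' Λ hi'Λ.le) hδacc
  have haccδ : ∀ ε < δ, ∃ x ∈ G i', ε < x ∧ x < δ := hδGi'.2.2
  have hguard := hDF (G i') (hclub i' hi'Λ.le).1
  have hδF : δ ∈ F (G i') := by
    have := hδinG i' hi'Λ
    rw [hEeq i', hstep] at this
    exact this.2.2
  apply hguard.2.2 δ hδS ?_ hδF
  -- A (G i') δ ⊆ D (G i')
  rw [hAdef]
  simp only [if_pos haccδ]
  rintro β ⟨hβ0, α, hαe, hne, rfl⟩
  rw [hc2] at hαe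
  obtain ⟨j, hj, rfl⟩ := hαe
  set α := ce δ j with hα
  have hαmem : α ∈ e δ := by rw [hc2]; exact ⟨j, hj, rfl⟩
  have hαδ : α < δ := hc3 hαmem
  have hi₀le : i₀ α ≤ i' := Ordinal.le_bsup _ j hj
  have hβf : sSup (G i' ∩ Set.Iio α) = f α (i₀ α) := hi₀ α i' hi₀le hi'Λ
  have hkey : ∀ i, i' ≤ i → i < Λ → sSup (G i' ∩ Set.Iio α) ∈ G i := by
    intro i hle hiΛ
    have heq : f α i = sSup (G i' ∩ Set.Iio α) := by
      rw [hβf]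
      exact hi₀ α i (hi₀le.trans hle) hiΛ
    have hnei : (G i ∩ Set.Iio α).Nonempty := by
      by_contra hcon'
      rw [Set.not_nonempty_iff_eq_empty] at hcon'
      have : f α i = 0 := by rw [hfdef]; simp [hcon']
      rw [heq] at this
      exact absurd this hβ0.ne'
    have : sSup (G i ∩ Set.Iio α) ∈ G i := by
      apply csSup_mem_of_closed (hclub i hiΛ.le).1.2 Set.inter_subset_left hnei
        (bdd_inter_Iio _ α)
      exact lt_of_le_of_lt (sSup_int_le _ hnei) (lt_trans hαδ hδL)
    rwa [show sSup (G i ∩ Set.Iio α) = f α i from rfl, heq] at this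
  have hi'1 : i' + 1 < Λ := by
    rw [Ordinal.add_one_eq_succ]
    exact hΛlim.succ_lt hi'Λ
  have hmem : sSup (G i' ∩ Set.Iio α) ∈ G (i' + 1) := hkey (i' + 1) (le_of_lt (lt_add_one i')) hi'1
  have : sSup (G i' ∩ Set.Iio α) ∈ E i' := hmem.2 i' (lt_add_one i')
  rw [hEeq i', hstep] at this
  exact this.2.1
end

section
/- Let λ be an infinite cardinal, I ⊆ {sequences of ordinals < λ of length ≤ ω} be closed under initial segments, p a prime, and ⟨f_α : α < α*⟩ (α* ≤ 2^ℵ₀) a family of strictly increasing functions f_α : ω → ω with f_α(0) = 0, and let G^a_I be the presented group. Then for every n < ω, η ∈ P^I_n and ρ : n+1 → ω, there is an endomorphism h of G^a_I which is a projection (h is the identity on its range) and satisfies: h(x_{ν,ϱ}) = x_{η,ρ} if (ν,ϱ) = (η,ρ) and h(x_{ν,ϱ}) = 0 otherwise; and for ν ∈ P^I_ω, α < α*, m < ω: h(y^m_{ν,α}) = 0 unless both m ≤ n and (ν↾n, f_α↾(n+1)) = (η,ρ), in which case h(y^m_{ν,α}) = p^{f_α(n)−f_α(m)}·x_{η,ρ}.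 -/
open Cardinal

/-- Generators for the group `G^a_I`: `x η ρ` for `η` a finite sequence of
ordinals and `ρ` a finite sequence of naturals, and `y η a n` for `η` an
`ω`-sequence of ordinals, `a` an index for the family of functions, `n < ω`. -/
inductive PGen (A : Type) : Type 1 where
  | x (η : List Ordinal) (ρ : List ℕ) : PGen A
  | y (η : ℕ → Ordinal) (a : A) (n : ℕ) : PGen A

/-- The admissible generators: `x η ρ` for `η ∈ P^I_n` (i.e. `η ∈ Ifin` of
length `n`) and `ρ : n+1 → ω`; `y η a n` for `η ∈ P^I_ω` (i.e. `η ∈ Iinf`). -/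
def PGenOK (Ifin : Set (List Ordinal)) (Iinf : Set (ℕ → Ordinal)) {A : Type} :
    PGen A → Prop
  | .x η ρ => η ∈ Ifin ∧ ρ.length = η.length + 1
  | .y η _ _ => η ∈ Iinf

/-- The relators of the presentation of `G^a_I`:
`p^(ρ(n)) • x_{η,ρ}` and
`p^(f_a(n+1) - f_a(n)) • y^{n+1}_{η,a} - y^n_{η,a} + x_{η↾n, f_a↾(n+1)}`. -/
def PRels (Ifin : Set (List Ordinal)) (Iinf : Set (ℕ → Ordinal)) (A : Type)
    (p : ℕ) (f : A → ℕ → ℕ) :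
    Set (FreeAbelianGroup {g : PGen A // PGenOK Ifin Iinf g}) :=
  {r | (∃ (η : List Ordinal) (ρ : List ℕ) (h : PGenOK Ifin Iinf (PGen.x η ρ)),
          r = (p ^ ρ.getD η.length 0) •
            FreeAbelianGroup.of
              (⟨PGen.x η ρ, h⟩ : {g : PGen A // PGenOK Ifin Iinf g})) ∨
       (∃ (η : ℕ → Ordinal) (a : A) (n : ℕ)
          (h1 : PGenOK Ifin Iinf (PGen.y η a (n + 1)))
          (h2 : PGenOK Ifin Iinf (PGen.y η a n))
          (h3 : PGenOK Ifin Iinf (PGen.x (List.ofFn fun i : Fin n => η i)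
            (List.ofFn fun i : Fin (n + 1) => f a i))),
          r = (p ^ (f a (n + 1) - f a n)) •
                FreeAbelianGroup.of
                  (⟨PGen.y η a (n + 1), h1⟩ : {g : PGen A // PGenOK Ifin Iinf g})
              - FreeAbelianGroup.of
                  (⟨PGen.y η a n, h2⟩ : {g : PGen A // PGenOK Ifin Iinf g})
              + FreeAbelianGroup.of
                  (⟨PGen.x (List.ofFn fun i : Fin n => η i)
                    (List.ofFn fun i : Fin (n + 1) => f a i), h3⟩ :
                      {g : PGen A // PGenOK Ifin Iinf g}))}

/-- The abelian group `G^a_I`, presented by the above generators and relations. -/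
def GGroup (Ifin : Set (List Ordinal)) (Iinf : Set (ℕ → Ordinal)) (A : Type)
    (p : ℕ) (f : A → ℕ → ℕ) : Type 1 :=
  FreeAbelianGroup {g : PGen A // PGenOK Ifin Iinf g} ⧸
    AddSubgroup.closure (PRels Ifin Iinf A p f)

instance (Ifin : Set (List Ordinal)) (Iinf : Set (ℕ → Ordinal)) (A : Type)
    (p : ℕ) (f : A → ℕ → ℕ) : AddCommGroup (GGroup Ifin Iinf A p f) :=
  QuotientAddGroup.Quotient.addCommGroup _

/-- The image of the generator `x_{η,ρ}` in `G^a_I`. -/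
def xElt (Ifin : Set (List Ordinal)) (Iinf : Set (ℕ → Ordinal)) {A : Type}
    (p : ℕ) (f : A → ℕ → ℕ) (η : List Ordinal) (ρ : List ℕ)
    (h : PGenOK Ifin Iinf (PGen.x (A := A) η ρ)) : GGroup Ifin Iinf A p f :=
  QuotientAddGroup.mk (FreeAbelianGroup.of ⟨PGen.x η ρ, h⟩)

/-- The image of the generator `y^n_{η,a}` in `G^a_I`. -/
def yElt (Ifin : Set (List Ordinal)) (Iinf : Set (ℕ → Ordinal)) {A : Type}
    (p : ℕ) (f : A → ℕ → ℕ) (η : ℕ → Ordinal) (a : A) (n : ℕ)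
    (h : PGenOK Ifin Iinf (PGen.y η a n)) : GGroup Ifin Iinf A p f :=
  QuotientAddGroup.mk (FreeAbelianGroup.of ⟨PGen.y η a n, h⟩)


section Aux

variable (Ifin : Set (List Ordinal)) (Iinf : Set (ℕ → Ordinal)) {A : Type}
  (p : ℕ) (f : A → ℕ → ℕ) (n : ℕ) (η : List Ordinal) (ρ : List ℕ)
  (hx : PGenOK Ifin Iinf (PGen.x (A := A) η ρ))

open Classical in
/-- The target values on generators for the projection. -/
noncomputable def pTgt : {g : PGen A // PGenOK Ifin Iinf g} → GGroup Ifin Iinf A p f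
  | ⟨.x ν ϱ, _⟩ => if (ν, ϱ) = (η, ρ) then xElt Ifin Iinf p f η ρ hx else 0
  | ⟨.y ν a m, _⟩ =>
      if m ≤ n ∧ (List.ofFn fun i : Fin n => ν i) = η ∧
          (List.ofFn fun i : Fin (n + 1) => f a i) = ρ
      then (p ^ (f a n - f a m) : ℕ) • xElt Ifin Iinf p f η ρ hx else 0

open Classical in
lemma pTgt_x (ν : List Ordinal) (ϱ : List ℕ) (h : PGenOK Ifin Iinf (PGen.x (A := A) ν ϱ)) :
    pTgt Ifin Iinf p f n η ρ hx ⟨.x ν ϱ, h⟩ =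
      if (ν, ϱ) = (η, ρ) then xElt Ifin Iinf p f η ρ hx else 0 := rfl

open Classical in
lemma pTgt_y (ν : ℕ → Ordinal) (a : A) (m : ℕ) (h : PGenOK Ifin Iinf (PGen.y ν a m)) :
    pTgt Ifin Iinf p f n η ρ hx ⟨.y ν a m, h⟩ =
      if m ≤ n ∧ (List.ofFn fun i : Fin n => ν i) = η ∧
          (List.ofFn fun i : Fin (n + 1) => f a i) = ρ
      then (p ^ (f a n - f a m) : ℕ) • xElt Ifin Iinf p f η ρ hx else 0 := rfl

end Aux

/-- Observation `(*)₀` in the proof of 3.18(1): for every `n < ω`,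
`η ∈ P^I_n` and `ρ : n+1 → ω` there is a projection `h` of `G^a_I` (an
endomorphism which is the identity on its range) sending `x_{η,ρ}` to itself,
all other `x`-generators to `0`, and `y^m_{ν,α}` to
`p^(f_α(n)-f_α(m)) • x_{η,ρ}` if `m ≤ n` and `(ν↾n, f_α↾(n+1)) = (η,ρ)`,
and to `0` otherwise. -/
theorem statement11 (p : ℕ) (hp : p.Prime)
    (lam : Cardinal.{0}) (hlam : ℵ₀ ≤ lam)
    (Ifin : Set (List Ordinal)) (Iinf : Set (ℕ → Ordinal))
    (hb1 : ∀ η ∈ Ifin, ∀ o ∈ η, o < lam.ord)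
    (hb2 : ∀ η ∈ Iinf, ∀ n : ℕ, η n < lam.ord)
    (hc1 : ∀ η ∈ Ifin, ∀ k : ℕ, η.take k ∈ Ifin)
    (hc2 : ∀ η ∈ Iinf, ∀ n : ℕ, (List.ofFn fun i : Fin n => η i) ∈ Ifin)
    (A : Type) (hA : Cardinal.mk A ≤ 2 ^ (ℵ₀ : Cardinal))
    (f : A → ℕ → ℕ)
    (hfmono : ∀ a, StrictMono (f a)) (hf0 : ∀ a, f a 0 = 0)
    (n : ℕ) (η : List Ordinal) (ρ : List ℕ) (hη : η.length = n)
    (hx : PGenOK Ifin Iinf (PGen.x (A := A) η ρ)) :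
    ∃ h : GGroup Ifin Iinf A p f →+ GGroup Ifin Iinf A p f,
      (∀ z, h (h z) = h z) ∧
      h (xElt Ifin Iinf p f η ρ hx) = xElt Ifin Iinf p f η ρ hx ∧
      (∀ (ν : List Ordinal) (ϱ : List ℕ)
        (hν : PGenOK Ifin Iinf (PGen.x (A := A) ν ϱ)),
        (ν, ϱ) ≠ (η, ρ) → h (xElt Ifin Iinf p f ν ϱ hν) = 0) ∧
      (∀ (ν : ℕ → Ordinal) (a : A) (m : ℕ)
        (hy : PGenOK Ifin Iinf (PGen.y ν a m)),
        ((m ≤ n ∧ (List.ofFn fun i : Fin n => ν i) = η ∧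
            (List.ofFn fun i : Fin (n + 1) => f a i) = ρ) →
          h (yElt Ifin Iinf p f ν a m hy) =
            (p ^ (f a n - f a m) : ℕ) • xElt Ifin Iinf p f η ρ hx) ∧
        (¬ (m ≤ n ∧ (List.ofFn fun i : Fin n => ν i) = η ∧
            (List.ofFn fun i : Fin (n + 1) => f a i) = ρ) →
          h (yElt Ifin Iinf p f ν a m hy) = 0)) := by
  classical
  set X := xElt Ifin Iinf p f η ρ hx with hXdef
  set N := AddSubgroup.closure (PRels Ifin Iinf A p f) with hNdef
  -- the key relation: p^(ρ n) • X = 0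
  have keyx : (p ^ ρ.getD η.length 0 : ℕ) • X = 0 := by
    have hmem : ((p ^ ρ.getD η.length 0 : ℕ) •
        FreeAbelianGroup.of (⟨PGen.x η ρ, hx⟩ : {g : PGen A // PGenOK Ifin Iinf g})) ∈ N :=
      AddSubgroup.subset_closure (Or.inl ⟨η, ρ, hx, rfl⟩)
    have : ((p ^ ρ.getD η.length 0 : ℕ) • X : GGroup Ifin Iinf A p f) =
        QuotientAddGroup.mk ((p ^ ρ.getD η.length 0 : ℕ) •
          FreeAbelianGroup.of (⟨PGen.x η ρ, hx⟩ : {g : PGen A // PGenOK Ifin Iinf g})) := by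
      rw [hXdef]
      exact (map_nsmul (QuotientAddGroup.mk' N) _ _).symm
    rw [this]
    exact (QuotientAddGroup.eq_zero_iff _).2 hmem
  set L := (FreeAbelianGroup.lift (pTgt Ifin Iinf p f n η ρ hx) :
    FreeAbelianGroup {g : PGen A // PGenOK Ifin Iinf g} →+ GGroup Ifin Iinf A p f) with hLdef
  have hLof : ∀ g, L (FreeAbelianGroup.of g) = pTgt Ifin Iinf p f n η ρ hx g := fun g =>
    FreeAbelianGroup.lift_apply_of _ _
  have hker : ∀ r ∈ N, L r = 0 := by
    have : N ≤ L.ker := by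
      rw [hNdef, AddSubgroup.closure_le]
      rintro r (⟨ν, ϱ, hok, rfl⟩ | ⟨ν, a, m, h1, h2, h3, rfl⟩)
      · simp only [SetLike.mem_coe, AddMonoidHom.mem_ker, map_nsmul, hLof, pTgt_x]
        by_cases hpair : (ν, ϱ) = (η, ρ)
        · rw [if_pos hpair]
          obtain ⟨rfl, rfl⟩ := Prod.mk.injEq .. ▸ hpair
          exact keyx
        · rw [if_neg hpair, smul_zero]
      · simp only [SetLike.mem_coe, AddMonoidHom.mem_ker, map_add, map_sub, map_nsmul,
          hLof, pTgt_x, pTgt_y]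
        have hmono := (hfmono a).monotone
        by_cases hc : m ≤ n ∧ (List.ofFn fun i : Fin n => ν i) = η ∧
            (List.ofFn fun i : Fin (n + 1) => f a i) = ρ
        · by_cases hc1 : m + 1 ≤ n ∧ (List.ofFn fun i : Fin n => ν i) = η ∧
              (List.ofFn fun i : Fin (n + 1) => f a i) = ρ
          · -- m + 1 ≤ n
            have hne : ¬ ((List.ofFn fun i : Fin m => ν i), (List.ofFn fun i : Fin (m+1) => f a i))
                = (η, ρ) := by
              intro hpair
              have := congrArg (fun q : List Ordinal × List ℕ => q.1.length) hpair
              simp [hη] at this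
              omega
            rw [if_pos hc, if_pos hc1, if_neg hne, smul_smul, ← pow_add]
            have h1le : f a m ≤ f a (m+1) := hmono (Nat.le_succ m)
            have h2le : f a (m+1) ≤ f a n := hmono hc1.1
            have : f a (m + 1) - f a m + (f a n - f a (m + 1)) = f a n - f a m := by omega
            rw [this]
            abel
          · -- m = n
            obtain rfl : m = n := by
              rcases hc with ⟨hmn, he1, he2⟩
              by_contra hne
              exact hc1 ⟨by omega, he1, he2⟩
            have hpair : ((List.ofFn fun i : Fin m => ν i), (List.ofFn fun i : Fin (m+1) => f a i))
                = (η, ρ) := by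
              rw [Prod.mk.injEq]; exact ⟨hc.2.1, hc.2.2⟩
            rw [if_pos hc, if_neg hc1, if_pos hpair, Nat.sub_self, pow_zero, one_smul, smul_zero]
            abel
        · have hc1 : ¬ (m + 1 ≤ n ∧ (List.ofFn fun i : Fin n => ν i) = η ∧
              (List.ofFn fun i : Fin (n + 1) => f a i) = ρ) := fun h =>
            hc ⟨by omega, h.2.1, h.2.2⟩
          have hne : ¬ ((List.ofFn fun i : Fin m => ν i), (List.ofFn fun i : Fin (m+1) => f a i))
              = (η, ρ) := by
            intro hpair
            have hlen := congrArg (fun q : List Ordinal × List ℕ => q.1.length) hpair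
            simp [hη] at hlen
            subst hlen
            rw [Prod.mk.injEq] at hpair
            exact hc ⟨le_refl _, hpair.1, hpair.2⟩
          rw [if_neg hc, if_neg hc1, if_neg hne, smul_zero, sub_zero, add_zero]
    exact fun r hr => this hr
  set h0 : GGroup Ifin Iinf A p f →+ GGroup Ifin Iinf A p f := QuotientAddGroup.lift N L (fun r hr => (AddMonoidHom.mem_ker).2 (hker r hr)) with hh0def
  have hxval : ∀ (ν : List Ordinal) (ϱ : List ℕ)
      (hν : PGenOK Ifin Iinf (PGen.x (A := A) ν ϱ)),
      h0 (xElt Ifin Iinf p f ν ϱ hν) = if (ν, ϱ) = (η, ρ) then X else 0 := by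
    intro ν ϱ hν
    show h0 (QuotientAddGroup.mk _) = _
    show L _ = _
    rw [hLof, pTgt_x]
  have hyval : ∀ (ν : ℕ → Ordinal) (a : A) (m : ℕ)
      (hy : PGenOK Ifin Iinf (PGen.y ν a m)),
      h0 (yElt Ifin Iinf p f ν a m hy) =
        if m ≤ n ∧ (List.ofFn fun i : Fin n => ν i) = η ∧
            (List.ofFn fun i : Fin (n + 1) => f a i) = ρ
        then (p ^ (f a n - f a m) : ℕ) • X else 0 := by
    intro ν a m hy
    show h0 (QuotientAddGroup.mk _) = _
    show L _ = _
    rw [hLof, pTgt_y]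
  have hXfix : h0 X = X := by
    rw [hXdef, hxval, if_pos rfl]
  refine ⟨h0, ?_, ?_, ?_, ?_⟩
  · intro z
    induction z using QuotientAddGroup.induction_on with
    | H g =>
      induction g using FreeAbelianGroup.induction_on with
      | zero => show h0 (h0 (0 : GGroup Ifin Iinf A p f)) = h0 0; simp
      | of g =>
        obtain ⟨gv, hgv⟩ := g
        cases gv with
        | x ν ϱ =>
          show h0 (h0 (xElt Ifin Iinf p f ν ϱ hgv)) = h0 (xElt Ifin Iinf p f ν ϱ hgv)
          rw [hxval]
          by_cases hpair : (ν, ϱ) = (η, ρ)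
          · rw [if_pos hpair, hXfix]
          · rw [if_neg hpair, map_zero]
        | y ν a m =>
          show h0 (h0 (yElt Ifin Iinf p f ν a m hgv)) = h0 (yElt Ifin Iinf p f ν a m hgv)
          rw [hyval]
          split
          · rw [map_nsmul, hXfix]
          · rw [map_zero]
      | neg g ih =>
        show h0 (h0 (QuotientAddGroup.mk (-FreeAbelianGroup.of g))) =
          h0 (QuotientAddGroup.mk (-FreeAbelianGroup.of g))
        have hih : h0 (h0 (QuotientAddGroup.mk (FreeAbelianGroup.of g))) =
            h0 (QuotientAddGroup.mk (FreeAbelianGroup.of g)) := ih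
        have e := map_neg h0 (QuotientAddGroup.mk (FreeAbelianGroup.of g))
        have e' := map_neg h0 (h0 (QuotientAddGroup.mk (FreeAbelianGroup.of g)))
        have e3 : -h0 (h0 (QuotientAddGroup.mk (FreeAbelianGroup.of g))) =
            -h0 (QuotientAddGroup.mk (FreeAbelianGroup.of g)) := by rw [hih]
        exact (congrArg h0 e).trans (e'.trans (e3.trans e.symm))
      | add g1 g2 ih1 ih2 =>
        show h0 (h0 (QuotientAddGroup.mk (g1 + g2))) = h0 (QuotientAddGroup.mk (g1 + g2))
        have hih1 : h0 (h0 (QuotientAddGroup.mk g1)) = h0 (QuotientAddGroup.mk g1) := ih1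
        have hih2 : h0 (h0 (QuotientAddGroup.mk g2)) = h0 (QuotientAddGroup.mk g2) := ih2
        have e := map_add h0 (QuotientAddGroup.mk g1) (QuotientAddGroup.mk g2)
        have e' := map_add h0 (h0 (QuotientAddGroup.mk g1)) (h0 (QuotientAddGroup.mk g2))
        have e3 : h0 (h0 (QuotientAddGroup.mk g1)) + h0 (h0 (QuotientAddGroup.mk g2)) =
            h0 (QuotientAddGroup.mk g1) + h0 (QuotientAddGroup.mk g2) := by rw [hih1, hih2]
        exact (congrArg h0 e).trans (e'.trans (e3.trans e.symm))
  · exact hXfix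
  · intro ν ϱ hν hne
    have hv := hxval ν ϱ hν
    rw [if_neg hne] at hv
    exact hv
  · intro ν a m hy
    have hv := hyval ν a m hy
    constructor
    · intro hcond
      rw [if_pos hcond] at hv
      exact hv
    · intro hcond
      rw [if_neg hcond] at hv
      exact hv
end

section
/- Let λ be an infinite cardinal, I ⊆ {sequences of ordinals < λ of length ≤ ω} be closed under initial segments, p a prime, and ⟨f_α : α < α*⟩ (α* ≤ 2^ℵ₀) a family of strictly increasing functions f_α : ω → ω with f_α(0) = 0, and let G^a_I be the presented group. Then for every z ∈ G^a_I and every m < ω there is z' in the subgroup of G^a_I generated by {x_{η,ρ} : n < ω, η ∈ P^I_n, ρ : n+1 → ω} such that z − z' is divisible by pᵐ in G^a_I. -/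
open Cardinal

/-- Observation `(*)₁` in the proof of 3.18(1): every element of `G^a_I` is,
modulo divisibility by `pᵐ`, in the subgroup generated by the `x`-generators. -/
theorem statement12 (p : ℕ) (hp : p.Prime)
    (lam : Cardinal.{0}) (hlam : ℵ₀ ≤ lam)
    (Ifin : Set (List Ordinal)) (Iinf : Set (ℕ → Ordinal))
    (hb1 : ∀ η ∈ Ifin, ∀ o ∈ η, o < lam.ord)
    (hb2 : ∀ η ∈ Iinf, ∀ n : ℕ, η n < lam.ord)
    (hc1 : ∀ η ∈ Ifin, ∀ k : ℕ, η.take k ∈ Ifin)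
    (hc2 : ∀ η ∈ Iinf, ∀ n : ℕ, (List.ofFn fun i : Fin n => η i) ∈ Ifin)
    (A : Type) (hA : Cardinal.mk A ≤ 2 ^ (ℵ₀ : Cardinal))
    (f : A → ℕ → ℕ)
    (hfmono : ∀ a, StrictMono (f a)) (hf0 : ∀ a, f a 0 = 0) :
    ∀ (z : GGroup Ifin Iinf A p f) (m : ℕ),
      ∃ z' ∈ AddSubgroup.closure {w : GGroup Ifin Iinf A p f |
          ∃ (η : List Ordinal) (ρ : List ℕ)
            (hx : PGenOK Ifin Iinf (PGen.x (A := A) η ρ)),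
            w = xElt Ifin Iinf p f η ρ hx},
        ∃ w : GGroup Ifin Iinf A p f, (p ^ m : ℕ) • w = z - z' := by

  intro z m
  set C := AddSubgroup.closure {w : GGroup Ifin Iinf A p f |
      ∃ (η : List Ordinal) (ρ : List ℕ)
        (hx : PGenOK Ifin Iinf (PGen.x (A := A) η ρ)),
        w = xElt Ifin Iinf p f η ρ hx} with hC
  -- the relation in the quotient group
  have rel : ∀ (η : ℕ → Ordinal) (hη : η ∈ Iinf) (a : A) (n : ℕ),
      (p ^ (f a (n + 1) - f a n)) • yElt Ifin Iinf p f η a (n + 1) hη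
        = yElt Ifin Iinf p f η a n hη
          - xElt Ifin Iinf p f (List.ofFn fun i : Fin n => η i)
              (List.ofFn fun i : Fin (n + 1) => f a i)
              ⟨hc2 η hη n, by simp⟩ := by
    intro η hη a n
    set π := QuotientAddGroup.mk' (AddSubgroup.closure (PRels Ifin Iinf A p f)) with hπ
    have hr : ((p ^ (f a (n + 1) - f a n)) •
        FreeAbelianGroup.of
          (⟨PGen.y η a (n + 1), hη⟩ : {g : PGen A // PGenOK Ifin Iinf g})
        - FreeAbelianGroup.of
            (⟨PGen.y η a n, hη⟩ : {g : PGen A // PGenOK Ifin Iinf g})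
        + FreeAbelianGroup.of
            (⟨PGen.x (List.ofFn fun i : Fin n => η i)
              (List.ofFn fun i : Fin (n + 1) => f a i), ⟨hc2 η hη n, by simp⟩⟩ :
                {g : PGen A // PGenOK Ifin Iinf g}))
          ∈ AddSubgroup.closure (PRels Ifin Iinf A p f) :=
      AddSubgroup.subset_closure
        (Or.inr ⟨η, a, n, hη, hη, ⟨hc2 η hη n, by simp⟩, rfl⟩)
    have h0 := (QuotientAddGroup.eq_zero_iff _).2 hr
    rw [show (QuotientAddGroup.mk : _ → GGroup Ifin Iinf A p f) = π from rfl] at h0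
    rw [map_add, map_sub, AddMonoidHom.map_nsmul] at h0
    have hX : yElt Ifin Iinf p f η a (n + 1) hη
        = π (FreeAbelianGroup.of ⟨PGen.y η a (n + 1), hη⟩) := rfl
    have hY : yElt Ifin Iinf p f η a n hη
        = π (FreeAbelianGroup.of ⟨PGen.y η a n, hη⟩) := rfl
    have hZ : xElt Ifin Iinf p f (List.ofFn fun i : Fin n => η i)
        (List.ofFn fun i : Fin (n + 1) => f a i) ⟨hc2 η hη n, by simp⟩
        = π (FreeAbelianGroup.of ⟨PGen.x (List.ofFn fun i : Fin n => η i)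
            (List.ofFn fun i : Fin (n + 1) => f a i), ⟨hc2 η hη n, by simp⟩⟩) := rfl
    rw [hX, hY, hZ]
    set X := π (FreeAbelianGroup.of ⟨PGen.y η a (n + 1), hη⟩)
    set Y := π (FreeAbelianGroup.of ⟨PGen.y η a n, hη⟩)
    set Z := π (FreeAbelianGroup.of ⟨PGen.x (List.ofFn fun i : Fin n => η i)
        (List.ofFn fun i : Fin (n + 1) => f a i), ⟨hc2 η hη n, by simp⟩⟩)
    have : (p ^ (f a (n + 1) - f a n)) • X
        = ((p ^ (f a (n + 1) - f a n)) • X - Y + Z) + (Y - Z) := by abel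
    have h1 : (p ^ (f a (n + 1) - f a n)) • X = Y - Z := by rw [this, h0, zero_add]
    exact h1
  -- iterated relation
  have key : ∀ (η : ℕ → Ordinal) (hη : η ∈ Iinf) (a : A) (n k : ℕ),
      ∃ z' ∈ C, (p ^ (f a (n + k) - f a n)) • yElt Ifin Iinf p f η a (n + k) hη
        = yElt Ifin Iinf p f η a n hη - z' := by
    intro η hη a n k
    induction k with
    | zero => exact ⟨0, zero_mem _, by simp⟩
    | succ k ih =>
      obtain ⟨z', hz', hk⟩ := ih
      refine ⟨z' + (p ^ (f a (n + k) - f a n)) •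
          xElt Ifin Iinf p f (List.ofFn fun i : Fin (n + k) => η i)
            (List.ofFn fun i : Fin (n + k + 1) => f a i) ⟨hc2 η hη (n + k), by simp⟩,
        ?_, ?_⟩
      · refine add_mem hz' (AddSubgroup.nsmul_mem _ ?_ _)
        exact AddSubgroup.subset_closure ⟨_, _, ⟨hc2 η hη (n + k), by simp⟩, rfl⟩
      have h1 : f a n ≤ f a (n + k) := (hfmono a).monotone (by omega)
      have h2 : f a (n + k) ≤ f a (n + k + 1) := (hfmono a).monotone (by omega)
      have he : f a (n + (k + 1)) - f a n
          = (f a (n + k + 1) - f a (n + k)) + (f a (n + k) - f a n) := by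
        have h3 : n + (k + 1) = n + k + 1 := by omega
        rw [h3]; omega
      have hy : yElt Ifin Iinf p f η a (n + (k + 1)) hη
          = yElt Ifin Iinf p f η a ((n + k) + 1) hη := by
        congr 1
      rw [he, pow_add, mul_nsmul, hy, rel η hη a (n + k), smul_sub, hk, sub_sub]
  -- growth of f
  have hgrow : ∀ (a : A) (n k : ℕ), f a n + k ≤ f a (n + k) := by
    intro a n k
    induction k with
    | zero => simp
    | succ k ih =>
      have := hfmono a (show n + k < n + (k + 1) by omega)
      omega
  -- the main predicate is closed under the group operations; do induction
  induction z using QuotientAddGroup.induction_on with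
  | _ g =>
    induction g using FreeAbelianGroup.induction_on with
    | zero => exact ⟨0, zero_mem _, 0, by simp; exact (sub_self _).symm⟩
    | of x =>
      obtain ⟨g, hg⟩ := x
      cases g with
      | x η ρ =>
        refine ⟨xElt Ifin Iinf p f η ρ hg,
          AddSubgroup.subset_closure ⟨η, ρ, hg, rfl⟩, 0, by simp [xElt]; exact (sub_self _).symm⟩
      | y η a n =>
        obtain ⟨z', hz', hk⟩ := key η hg a n m
        have hm : m ≤ f a (n + m) - f a n := by
          have := hgrow a n m; omega
        refine ⟨z', hz', (p ^ (f a (n + m) - f a n - m)) •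
            yElt Ifin Iinf p f η a (n + m) hg, ?_⟩
        rw [← mul_nsmul, ← pow_add]
        have h4 : f a (n + m) - f a n - m + m = f a (n + m) - f a n := by omega
        rw [h4, hk]
        rfl
    | neg x ih =>
      obtain ⟨z', hz', w, hw⟩ := ih
      refine ⟨-z', neg_mem hz', -w, ?_⟩
      have : ((QuotientAddGroup.mk (-FreeAbelianGroup.of x) : GGroup Ifin Iinf A p f))
          = -(QuotientAddGroup.mk (FreeAbelianGroup.of x)) := rfl
      rw [this, smul_neg, hw]; exact neg_sub' _ _
    | add x y ihx ihy =>
      obtain ⟨z1, hz1, w1, hw1⟩ := ihx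
      obtain ⟨z2, hz2, w2, hw2⟩ := ihy
      refine ⟨z1 + z2, add_mem hz1 hz2, w1 + w2, ?_⟩
      have : ((QuotientAddGroup.mk (x + y) : GGroup Ifin Iinf A p f))
          = (QuotientAddGroup.mk x) + (QuotientAddGroup.mk y) := rfl
      rw [this, smul_add, hw1, hw2]; exact sub_add_sub_comm _ _ _ _
end

section
/- There exists an injective sequence ⟨f_α : α < 2^ℵ₀⟩ of functions f_α : ω → ω such that: (a) each f_α is strictly increasing with f_α(0) = 0; (b) the sequence ⟨f_α(n+1) − f_α(n) : n < ω⟩ tends to infinity for each α; and (c) for every function h : (finite sequences of natural numbers) → ω there is some α < 2^ℵ₀ such that f_α(n) > h(f_α↾n) for infinitely many n < ω. -/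
open Cardinal

/-- The family indexed by `g : ℕ → ℕ`. -/
def myF (g : ℕ → ℕ) : ℕ → ℕ
  | 0 => 0
  | n + 1 => myF g n + (n + 1) + g n

/-- The diagonal sequence escaping `h`. -/
def mySeq (h : List ℕ → ℕ) : ℕ → ℕ
  | 0 => 0
  | n + 1 => mySeq h n + (n + 1) + h (List.ofFn fun k : Fin (n + 1) => mySeq h k)
decreasing_by
  · exact Nat.lt_succ_self n
  · exact k.isLt

lemma myF_eq (h : List ℕ → ℕ) :
    myF (fun n => h (List.ofFn fun k : Fin (n + 1) => mySeq h k)) = mySeq h := by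
  funext n
  induction n with
  | zero => rw [mySeq]; rfl
  | succ n ih => rw [mySeq]; simp only [myF, ih]

/-- Stage A `⊡` of the proof of 3.18(1): there is an injective family
`⟨f_α : α < 2^ℵ₀⟩` of strictly increasing functions `ω → ω` with `f_α(0) = 0`,
whose successive differences tend to infinity, such that every
`h : ω^{<ω} → ω` is "escaped" infinitely often by some `f_α`. -/
theorem statement13 :
    ∃ (ι : Type) (F : ι → ℕ → ℕ),
      Cardinal.mk ι = 2 ^ (ℵ₀ : Cardinal) ∧
      Function.Injective F ∧
      (∀ i, StrictMono (F i) ∧ F i 0 = 0) ∧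
      (∀ i, Filter.Tendsto (fun n => F i (n + 1) - F i n)
        Filter.atTop Filter.atTop) ∧
      (∀ h : List ℕ → ℕ, ∃ i, ∀ m : ℕ, ∃ n : ℕ, m ≤ n ∧
        h (List.ofFn fun k : Fin n => F i k) < F i n) := by
  refine ⟨ℕ → ℕ, myF, ?_, ?_, ?_, ?_, ?_⟩
  · rw [Cardinal.mk_arrow]
    simp [Cardinal.power_self_eq le_rfl]
  · intro g g' hgg
    funext n
    have : myF g (n + 1) = myF g' (n + 1) := by rw [hgg]
    have h2 : myF g n = myF g' n := by rw [hgg]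
    simp only [myF, h2] at this
    omega
  · intro g
    refine ⟨strictMono_nat_of_lt_succ fun n => ?_, rfl⟩
    simp [myF]; omega
  · intro g
    refine Filter.tendsto_atTop_mono (fun n => ?_) Filter.tendsto_id
    show n ≤ myF g (n + 1) - myF g n
    simp only [myF]
    omega
  · intro h
    refine ⟨fun n => h (List.ofFn fun k : Fin (n + 1) => mySeq h k), fun m => ⟨m + 1, Nat.le_succ m, ?_⟩⟩
    rw [myF_eq]
    simp only [mySeq]
    omega
end
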